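/- Let G be a td-group with closed subgroup H, X = H\G, and let K₁ ⊴ K₂ be open compact subgroups of G. Let K ⊆ K₂ be the subgroup containing K₁ corresponding to the image of (H∩K₂)/(H∩K₁) ↪ K₂/K₁. Then (a) 𝟏[1̄K₂] = Σ_{γ ∈ K\K₂} 𝟏[1̄Kγ] in C_c^∞(X,ℚ), i.e., the sets 1̄Kγ for γ ∈ K\K₂ are pairwise disjoint and cover 1̄K₂, and (b) 1̄K₁ = 1̄K as subsets of X, so that 1̄K₂ = ⊔_{γ ∈ K\K₂} γ̄K₁ (using normality of K₁). -/

import Mathlib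

open Pointwise

/-- Let `G` be a td-group, `H` a closed subgroup, `X = H\G` (subsets of `X`
are modelled by their preimages in `G`), and `K₁ ⊴ K₂` open compact subgroups.  Let
`K = (H∩K₂)·K₁ ⊆ K₂` be the subgroup corresponding to the image of
`(H∩K₂)/(H∩K₁) ↪ K₂/K₁`, and let `T` be a set of representatives for `K\K₂`.  Then:
(a) the sets `1̄Kγ` (`γ ∈ T`) are pairwise disjoint and cover `1̄K₂`, i.e.
    `HK₂ = ⊔_{γ∈T} HKγ`;
(b) `1̄K₁ = 1̄K` (i.e. `HK₁ = HK`), so that `1̄K₂ = ⊔_{γ∈T} γ̄K₁`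
    (i.e. `HK₂ = ⊔_{γ∈T} HγK₁`, using normality of `K₁`). -/
theorem stmt_18 {G : Type*} [Group G] [TopologicalSpace G] [IsTopologicalGroup G]
    (H : Subgroup G) (hHclosed : IsClosed (H : Set G))
    (K₁ K₂ : Subgroup G) (h12 : K₁ ≤ K₂)
    (hK₁o : IsOpen (K₁ : Set G)) (hK₂o : IsOpen (K₂ : Set G))
    (hK₁c : IsCompact (K₁ : Set G)) (hK₂c : IsCompact (K₂ : Set G))
    (hnormal : ∀ g ∈ K₂, ∀ x ∈ K₁, g * x * g⁻¹ ∈ K₁)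
    (Kset : Set G)
    (hKset : Kset = {g : G | ∃ h ∈ (H : Set G) ∩ (K₂ : Set G), ∃ x ∈ K₁, g = h * x})
    (T : Finset G) (hTsub : (↑T : Set G) ⊆ (K₂ : Set G))
    (hTcover : ∀ g ∈ K₂, ∃! γ, γ ∈ T ∧ g * γ⁻¹ ∈ Kset) :
    ((H : Set G) * (K₂ : Set G) = ⋃ γ ∈ T, (H : Set G) * Kset * {γ}) ∧
    (∀ γ₁ ∈ T, ∀ γ₂ ∈ T, γ₁ ≠ γ₂ →
      Disjoint ((H : Set G) * Kset * {γ₁}) ((H : Set G) * Kset * {γ₂})) ∧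
    ((H : Set G) * (K₁ : Set G) = (H : Set G) * Kset) ∧
    ((H : Set G) * (K₂ : Set G) = ⋃ γ ∈ T, (H : Set G) * {γ} * (K₁ : Set G)) ∧
    (∀ γ₁ ∈ T, ∀ γ₂ ∈ T, γ₁ ≠ γ₂ →
      Disjoint ((H : Set G) * {γ₁} * (K₁ : Set G))
        ((H : Set G) * {γ₂} * (K₁ : Set G))) := by
  have hK1S : (K₁ : Set G) ⊆ Kset := by
    intro x hx
    rw [hKset]
    exact ⟨1, ⟨H.one_mem, K₂.one_mem⟩, x, hx, (one_mul x).symm⟩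
  have hSsub : Kset ⊆ (K₂ : Set G) := by
    intro g hg
    rw [hKset] at hg
    obtain ⟨h, ⟨_, hh2⟩, x, hx, rfl⟩ := hg
    exact K₂.mul_mem hh2 (h12 hx)
  have hclosed : ∀ a ∈ (H : Set G) ∩ (K₂ : Set G), ∀ s ∈ Kset, a * s ∈ Kset := by
    rintro a ⟨ha1, ha2⟩ s hs
    rw [hKset] at hs ⊢
    obtain ⟨h₀, ⟨hh1, hh2⟩, x, hx, rfl⟩ := hs
    exact ⟨a * h₀, ⟨H.mul_mem ha1 hh1, K₂.mul_mem ha2 hh2⟩, x, hx, (mul_assoc _ _ _).symm⟩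
  have hHK : (H : Set G) * (K₁ : Set G) = (H : Set G) * Kset := by
    apply Set.Subset.antisymm
    · rintro g ⟨h, hh, x, hx, rfl⟩
      exact ⟨h, hh, x, hK1S hx, rfl⟩
    · rintro g ⟨h, hh, k, hk, rfl⟩
      rw [hKset] at hk
      obtain ⟨h', ⟨hh'H, _⟩, x, hx, rfl⟩ := hk
      exact ⟨h * h', H.mul_mem hh hh'H, x, hx, by group⟩
  have hcomm : ∀ γ ∈ (K₂ : Set G), (K₁ : Set G) * {γ} = {γ} * (K₁ : Set G) := by
    intro γ hγ
    apply Set.Subset.antisymm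
    · rintro g ⟨x, hx, b, hb, rfl⟩
      rw [Set.mem_singleton_iff] at hb; subst b
      refine ⟨γ, rfl, γ⁻¹ * x * γ, ?_, by group⟩
      have := hnormal γ⁻¹ (K₂.inv_mem hγ) x hx
      simpa [mul_assoc] using this
    · rintro g ⟨b, hb, x, hx, rfl⟩
      rw [Set.mem_singleton_iff] at hb; subst b
      exact ⟨γ * x * γ⁻¹, hnormal γ hγ x hx, γ, rfl, by group⟩
  have key : ∀ γ ∈ T, (H : Set G) * Kset * {γ} = (H : Set G) * {γ} * (K₁ : Set G) := by
    intro γ hγ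
    rw [← hHK, mul_assoc, hcomm γ (hTsub hγ), ← mul_assoc]
  have cover : (H : Set G) * (K₂ : Set G) = ⋃ γ ∈ T, (H : Set G) * Kset * {γ} := by
    apply Set.Subset.antisymm
    · rintro g ⟨h, hh, k, hk, rfl⟩
      obtain ⟨γ, ⟨hγT, hγK⟩, _⟩ := hTcover k hk
      refine Set.mem_biUnion hγT ?_
      exact ⟨h * (k * γ⁻¹), ⟨h, hh, k * γ⁻¹, hγK, rfl⟩, γ, rfl, by group⟩
    · intro g hg
      obtain ⟨γ, hγ, hgm⟩ := Set.mem_iUnion₂.1 hg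
      obtain ⟨a, ⟨h, hh, s, hs, rfl⟩, b, hb, rfl⟩ := hgm
      rw [Set.mem_singleton_iff] at hb; subst b
      exact ⟨h, hh, s * γ, K₂.mul_mem (hSsub hs) (hTsub hγ), by group⟩
  have disj : ∀ γ₁ ∈ T, ∀ γ₂ ∈ T, γ₁ ≠ γ₂ →
      Disjoint ((H : Set G) * Kset * {γ₁}) ((H : Set G) * Kset * {γ₂}) := by
    intro γ₁ h1 γ₂ h2 hne
    rw [Set.disjoint_left]
    rintro g ⟨a, ⟨h, hh, s, hs, rfl⟩, b, hb, rfl⟩ ⟨a', ⟨h', hh', s', hs', rfl⟩, b', hb', hg⟩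
    rw [Set.mem_singleton_iff] at hb hb'; subst b; subst b'
    have hg' : h' * s' * γ₂ = h * s * γ₁ := hg
    have hx2 : s * γ₁ ∈ K₂ := K₂.mul_mem (hSsub hs) (hTsub h1)
    obtain ⟨γ, _, huniq⟩ := hTcover (s * γ₁) hx2
    have e1 : γ₁ = γ := huniq γ₁ ⟨h1, by simpa using hs⟩
    have heq : s * γ₁ * γ₂⁻¹ = h⁻¹ * h' * s' := by
      have hcan : h * (s * γ₁ * γ₂⁻¹) = h * (h⁻¹ * h' * s') := by
        rw [show h * (h⁻¹ * h' * s') = h' * s' by group,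
          show h * (s * γ₁ * γ₂⁻¹) = h * s * γ₁ * γ₂⁻¹ by group, ← hg']
        group
      exact mul_left_cancel hcan
    have hmem : s * γ₁ * γ₂⁻¹ ∈ Kset := by
      rw [heq]
      refine hclosed (h⁻¹ * h') ⟨H.mul_mem (H.inv_mem hh) hh', ?_⟩ s' hs'
      have hK2 : h⁻¹ * h' = s * γ₁ * γ₂⁻¹ * s'⁻¹ := by rw [heq]; group
      rw [hK2]
      exact K₂.mul_mem (K₂.mul_mem hx2 (K₂.inv_mem (hTsub h2))) (K₂.inv_mem (hSsub hs'))
    have e2 : γ₂ = γ := huniq γ₂ ⟨h2, hmem⟩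
    exact hne (e1.trans e2.symm)
  refine ⟨cover, disj, hHK, ?_, ?_⟩
  · rw [cover]
    exact Set.iUnion₂_congr key
  · intro γ₁ h1 γ₂ h2 hne
    rw [← key γ₁ h1, ← key γ₂ h2]
    exact disj γ₁ h1 γ₂ h2 hne
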